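/- Let G be a cofinitary group, r ∈ 2^ω, and (s,E) a condition of Z†_G(r). Then: (1) if n ∉ dom(s), then for all but finitely many m ∈ ℕ the pair (s ∪ {(n,m)}, E) is a condition of Z†_G(r) extending (s,E); (2) if m ∉ ran(s), then for all but finitely many n ∈ ℕ the pair (s ∪ {(n,m)}, E) is a condition of Z†_G(r) extending (s,E). -/

import Mathlib

noncomputable section

/-- Permutations of the natural numbers (elements of `S_∞`). -/
abbrev Perm' := Equiv.Perm ℕ

/-- A letter of a word over `G ∪ {x, x⁻¹}`: either a group element (of `S_∞`),
or `Sum.inr true` standing for `x`, or `Sum.inr false` standing for `x⁻¹`. -/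
abbrev Letter := Perm' ⊕ Bool

/-- A word is a list of letters, written left to right
(the leftmost letter is applied last). -/
abbrev Word := List Letter

/-- A subgroup of `S_∞` is cofinitary if every non-identity element
has only finitely many fixed points. -/
def Cofinitary (G : Subgroup Perm') : Prop :=
  ∀ g ∈ G, g ≠ 1 → {n : ℕ | g n = n}.Finite

/-- A set of pairs is a partial injection (functional and injective). -/
def PartInj (s : Set (ℕ × ℕ)) : Prop :=
  (∀ ⦃a b c⦄, (a, b) ∈ s → (a, c) ∈ s → b = c) ∧
  (∀ ⦃a b c⦄, (a, c) ∈ s → (b, c) ∈ s → a = b)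

/-- Domain of a partial injection given as a set of pairs. -/
def pdom (s : Set (ℕ × ℕ)) : Set ℕ := Prod.fst '' s

/-- Range of a partial injection given as a set of pairs. -/
def pran (s : Set (ℕ × ℕ)) : Set ℕ := Prod.snd '' s

/-- The relation given by substituting the partial injection `s` for `x`
(and `s⁻¹` for `x⁻¹`) in a single letter. -/
def letterRel (s : Set (ℕ × ℕ)) : Letter → ℕ → ℕ → Prop
  | Sum.inl g => fun a b => g a = b
  | Sum.inr true => fun a b => (a, b) ∈ s
  | Sum.inr false => fun a b => (b, a) ∈ s

/-- The relation `w[s]`: evaluation of a word at the partial injection `s`,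
composing the letter relations (rightmost letter applied first). -/
def wordRel (s : Set (ℕ × ℕ)) : Word → ℕ → ℕ → Prop
  | [] => fun a b => a = b
  | l :: w => fun a b => ∃ c, wordRel s w a c ∧ letterRel s l c b

/-- `fix(w[s])`, the set of fixed points of the partial injection `w[s]`. -/
def wordFix (s : Set (ℕ × ℕ)) (w : Word) : Set ℕ := {n | wordRel s w n n}

/-- The word `x^k` for an integer `k` (for `k < 0`, `|k|` copies of `x⁻¹`). -/
def xpow (k : ℤ) : Word :=
  if 0 ≤ k then List.replicate k.toNat (Sum.inr true : Letter)
  else List.replicate (-k).toNat (Sum.inr false : Letter)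

/-- The block `g x^k` as a word. -/
def blockWord (p : Perm' × ℤ) : Word := Sum.inl p.1 :: xpow p.2

/-- `w` is a nice word (member of `W*_G`): `w = x^{k₀}` with `k₀ > 0`, or
`w = g_l x^{k_l} ⋯ g₁ x^{k₁} g₀ x^{k₀}` with `k₀ > 0`, all `k_i ≠ 0` and all
`g_i ∈ G \ {id}`. -/
def IsNice (G : Subgroup Perm') (w : Word) : Prop :=
  (∃ k : ℕ, 0 < k ∧ w = xpow (k : ℤ)) ∨
  (∃ bs : List (Perm' × ℤ), bs ≠ [] ∧
    (∀ p ∈ bs, p.1 ∈ G ∧ p.1 ≠ 1 ∧ p.2 ≠ 0) ∧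
    (∃ p, bs.getLast? = some p ∧ 0 < p.2) ∧
    w = (bs.map blockWord).flatten)

/-- The number of occurrences of `x` or `x⁻¹` in a word. -/
def xOccurrences (w : Word) : ℕ := w.countP (fun l => l.isRight)

/-- `w ∈ W¹_G`: a nice word with exactly one occurrence of `x` or `x⁻¹`. -/
def IsNiceOne (G : Subgroup Perm') (w : Word) : Prop :=
  IsNice G w ∧ xOccurrences w = 1

/-- `(s, E)` is a condition of Zhang's forcing `Z_G`: `s` is a finite partial
injection and `E` a finite set of nice words. -/
def ZCond (G : Subgroup Perm') (s : Set (ℕ × ℕ)) (E : Set Word) : Prop :=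
  s.Finite ∧ PartInj s ∧ E.Finite ∧ ∀ w ∈ E, IsNice G w

/-- `(t, F) ≤ (s, E)` in Zhang's forcing: `s ⊆ t`, `E ⊆ F`, and
`fix(w[t]) = fix(w[s])` for every `w ∈ E`. -/
def ZLe (t : Set (ℕ × ℕ)) (F : Set Word) (s : Set (ℕ × ℕ)) (E : Set Word) : Prop :=
  s ⊆ t ∧ E ⊆ F ∧ ∀ w ∈ E, wordFix t w = wordFix s w

/-- An injective tree: a nonempty set of finite sequences closed under initial
segments, all of whose elements are injective sequences. -/
def IsInjTree (T : Set (List ℕ)) : Prop :=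
  T.Nonempty ∧ (∀ t ∈ T, ∀ s : List ℕ, s <+: t → s ∈ T) ∧ ∀ t ∈ T, t.Nodup

/-- `T ∈ I_i(P)⁺`: an injective tree such that for every `s ∈ T` and every
finite `P₀ ⊆ P` there are `t ∈ T` extending `s` and `k ∈ dom(t) \ dom(s)` with
`t(k) ≠ f(k)` for all `f ∈ P₀`. -/
def TreePos (P : Set Perm') (T : Set (List ℕ)) : Prop :=
  IsInjTree T ∧
  ∀ s ∈ T, ∀ P₀ ⊆ P, P₀.Finite →
    ∃ t ∈ T, s <+: t ∧ ∃ k, s.length ≤ k ∧ k < t.length ∧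
      ∀ f ∈ P₀, t.getD k 0 ≠ f k

/-- A set `O` is closed under a relation `R` and its inverse. -/
def RelClosed (R : ℕ → ℕ → Prop) (O : Set ℕ) : Prop :=
  ∀ a b, R a b → (a ∈ O ↔ b ∈ O)

/-- The orbit of `n` under the (partial injective) relation `R`: the smallest
set containing `n` closed under applications of `R` and `R⁻¹`. -/
def relOrbit (R : ℕ → ℕ → Prop) (n : ℕ) : Set ℕ :=
  ⋂₀ {O : Set ℕ | n ∈ O ∧ RelClosed R O}

/-- The set of all orbits of the relation `R`. -/
def relOrbits (R : ℕ → ℕ → Prop) : Set (Set ℕ) := {O | ∃ n, O = relOrbit R n}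

/-- Domain of a relation. -/
def relDom (R : ℕ → ℕ → Prop) : Set ℕ := {a | ∃ b, R a b}

/-- Range of a relation. -/
def relRan (R : ℕ → ℕ → Prop) : Set ℕ := {b | ∃ a, R a b}

/-- The set of closed orbits of `R`: those orbits contained in `dom ∩ ran`. -/
def relClosedOrbits (R : ℕ → ℕ → Prop) : Set (Set ℕ) :=
  {O ∈ relOrbits R | O ⊆ relDom R ∩ relRan R}

/-- The relation of a partial injection given as a set of pairs. -/
def sRel (s : Set (ℕ × ℕ)) : ℕ → ℕ → Prop := fun a b => (a, b) ∈ s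

/-- The relation (graph) of a permutation of `ℕ`. -/
def permRel (f : Perm') : ℕ → ℕ → Prop := fun a b => f a = b

/-- A partial injection `s` is nice: every closed orbit has its minimum below
the minimum of the complement of the union of all closed orbits. -/
def NiceInj (s : Set (ℕ × ℕ)) : Prop :=
  ∀ O ∈ relClosedOrbits (sRel s),
    sInf O < sInf {n : ℕ | n ∉ ⋃₀ relClosedOrbits (sRel s)}

/-- The position of a closed orbit `O` of `s` in the well-order of closed
orbits by their minima. -/
def orbitIndex (s : Set (ℕ × ℕ)) (O : Set ℕ) : ℕ :=
  {P ∈ relClosedOrbits (sRel s) | sInf P < sInf O}.ncard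

/-- `s` codes `r`, i.e. `o_s ⊆ r`: the `n`-th closed orbit (in the well-order
by minima) has cardinality congruent to `r(n)` mod 2. -/
def CodesReal (s : Set (ℕ × ℕ)) (r : ℕ → Fin 2) : Prop :=
  ∀ O ∈ relClosedOrbits (sRel s), O.ncard % 2 = (r (orbitIndex s O) : ℕ)

/-- `(s, E)` is a condition of `Z_G(r)`. -/
def ZrCond (G : Subgroup Perm') (r : ℕ → Fin 2)
    (s : Set (ℕ × ℕ)) (E : Set Word) : Prop :=
  ZCond G s E ∧ NiceInj s ∧ CodesReal s r

/-- The `n`-th prime. -/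
def pPrime (n : ℕ) : ℕ := Nat.nth Nat.Prime n

/-- The orbit-coding function `o†`: `o†(n)` is the number of closed orbits of
`R` of cardinality `p_n`, modulo 2. -/
def odag (R : ℕ → ℕ → Prop) (n : ℕ) : ℕ :=
  {O ∈ relClosedOrbits R | O.ncard = pPrime n}.ncard % 2

/-- `v^k`: the word `v` concatenated `k` times. -/
def wpow (v : Word) (k : ℕ) : Word := (List.replicate k v).flatten

/-- `w ∈ W†_G`: a nice word that is indecomposable, i.e. not of the form `v^k`
for a nice word `v` and `k > 1`. -/
def Indecomposable (G : Subgroup Perm') (w : Word) : Prop :=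
  IsNice G w ∧ ¬∃ v : Word, IsNice G v ∧ ∃ k : ℕ, 1 < k ∧ w = wpow v k

/-- The inverse of a letter. -/
def letterInv : Letter → Letter
  | Sum.inl g => Sum.inl g⁻¹
  | Sum.inr b => Sum.inr (!b)

/-- The inverse of a word. -/
def wordInv (w : Word) : Word := (w.map letterInv).reverse

/-- `E` is closed under cyclic permutations and inverses thereof within `W*_G`. -/
def CyclClosed (G : Subgroup Perm') (E : Set Word) : Prop :=
  ∀ w ∈ E, ∀ w₀ w₁ : Word, w = w₀ ++ w₁ →
    (IsNice G (w₁ ++ w₀) → w₁ ++ w₀ ∈ E) ∧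
    (IsNice G (wordInv (w₁ ++ w₀)) → wordInv (w₁ ++ w₀) ∈ E)

/-- `(s, E)` is a condition of `Z†_G(r)`: a Zhang condition such that `E` is
closed under cyclic permutations and inverses thereof in `W*_G`, and whenever
`w = v^k ∈ E` with `v ∈ W†_G` then `v^l ∈ E` for all `0 < l ≤ k` and `o†_{v[s]}`
codes `r` up to `n` for every `n` with `p_n ≤ k`. -/
def ZdagCond (G : Subgroup Perm') (r : ℕ → Fin 2)
    (s : Set (ℕ × ℕ)) (E : Set Word) : Prop :=
  ZCond G s E ∧ CyclClosed G E ∧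
  ∀ w ∈ E, ∀ v : Word, ∀ k : ℕ, Indecomposable G v → w = wpow v k →
    (∀ l : ℕ, 0 < l → l ≤ k → wpow v l ∈ E) ∧
    (∀ n : ℕ, pPrime n ≤ k → ∀ i ≤ n, odag (wordRel s v) i = (r i : ℕ))

/-- Substituting the permutation `f` for `x` in a letter. -/
def letterPerm (f : Perm') : Letter → Perm'
  | Sum.inl g => g
  | Sum.inr true => f
  | Sum.inr false => f⁻¹

/-- `w[f]`: evaluation of a word at the permutation `f`. -/
def wordPerm (f : Perm') (w : Word) : Perm' := (w.map (letterPerm f)).prod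

/-- Two functions are eventually different. -/
def EvDiff (f g : ℕ → ℕ) : Prop := {k : ℕ | f k = g k}.Finite

/-- A set of permutations is an eventually different family. -/
def EDFamily (P : Set Perm') : Prop :=
  ∀ f ∈ P, ∀ g ∈ P, f ≠ g → EvDiff f g


section Basics

lemma wordRel_append (s : Set (ℕ×ℕ)) (w₂ w₁ : Word) (a : ℕ) : ∀ b,
    wordRel s (w₂ ++ w₁) a b ↔ ∃ c, wordRel s w₁ a c ∧ wordRel s w₂ c b := by
  induction w₂ with
  | nil => intro b; simp [wordRel]
  | cons l w ih =>
    intro b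
    simp only [List.cons_append, wordRel]
    constructor
    · rintro ⟨c, hc, hl⟩
      obtain ⟨d, hd, hw⟩ := (ih c).mp hc
      exact ⟨d, hd, c, hw, hl⟩
    · rintro ⟨c, hc, d, hd, hl⟩
      exact ⟨d, (ih d).mpr ⟨c, hc, hd⟩, hl⟩

lemma letterRel_mono {s t : Set (ℕ×ℕ)} (h : s ⊆ t) (l : Letter) (a b : ℕ) :
    letterRel s l a b → letterRel t l a b := by
  cases l with
  | inl g => exact id
  | inr b' => cases b' <;> exact fun hh => h hh

lemma wordRel_mono {s t : Set (ℕ×ℕ)} (h : s ⊆ t) (w : Word) : ∀ a b,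
    wordRel s w a b → wordRel t w a b := by
  induction w with
  | nil => exact fun a b => id
  | cons l w ih =>
    rintro a b ⟨c, hc, hl⟩
    exact ⟨c, ih a c hc, letterRel_mono h l c b hl⟩

def RelFunc (R : ℕ → ℕ → Prop) : Prop :=
  (∀ ⦃a b c⦄, R a b → R a c → b = c) ∧ (∀ ⦃a b c⦄, R a c → R b c → a = b)

lemma letterRel_func {s : Set (ℕ×ℕ)} (hs : PartInj s) (l : Letter) :
    RelFunc (letterRel s l) := by
  cases l with
  | inl g =>
    exact ⟨fun a b c h1 h2 => h1 ▸ h2 ▸ rfl,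
           fun a b c h1 h2 => g.injective (h1.trans h2.symm)⟩
  | inr b' =>
    cases b' with
    | true => exact ⟨fun a b c h1 h2 => hs.1 h1 h2, fun a b c h1 h2 => hs.2 h1 h2⟩
    | false => exact ⟨fun a b c h1 h2 => hs.2 h1 h2, fun a b c h1 h2 => hs.1 h1 h2⟩

lemma wordRel_func {s : Set (ℕ×ℕ)} (hs : PartInj s) (w : Word) :
    RelFunc (wordRel s w) := by
  induction w with
  | nil => exact ⟨fun a b c h1 h2 => h1 ▸ h2, fun a b c h1 h2 => h1.trans h2.symm⟩
  | cons l w ih =>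
    constructor
    · rintro a b c ⟨d, hd, hl⟩ ⟨e, he, hl'⟩
      obtain rfl : d = e := ih.1 hd he
      exact (letterRel_func hs l).1 hl hl'
    · rintro a b c ⟨d, hd, hl⟩ ⟨e, he, hl'⟩
      obtain rfl : d = e := (letterRel_func hs l).2 hl hl'
      exact ih.2 hd he

lemma mem_pdom {s : Set (ℕ×ℕ)} {a b : ℕ} (h : (a,b) ∈ s) : a ∈ pdom s := ⟨(a,b), h, rfl⟩
lemma mem_pran {s : Set (ℕ×ℕ)} {a b : ℕ} (h : (a,b) ∈ s) : b ∈ pran s := ⟨(a,b), h, rfl⟩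

lemma pdom_finite {s : Set (ℕ×ℕ)} (h : s.Finite) : (pdom s).Finite := h.image _
lemma pran_finite {s : Set (ℕ×ℕ)} (h : s.Finite) : (pran s).Finite := h.image _

end Basics
section Structure

/-- Compatibility of adjacent letters in a nice word. -/
def ok2 : Letter → Letter → Prop
  | Sum.inl _, Sum.inl _ => False
  | Sum.inr b, Sum.inr c => b = c
  | _, _ => True

/-- Structural facts about nice words used in the extension argument. -/
def GoodWord (G : Subgroup Perm') (w : Word) : Prop :=
  (∃ w', w = w' ++ [Sum.inr true]) ∧
  List.Chain' ok2 w ∧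
  (∀ u, w ≠ Sum.inr false :: u) ∧
  (∀ g : Perm', Sum.inl g ∈ w → g ∈ G ∧ g ≠ 1)

lemma chain'_replicate {α : Type*} {R : α → α → Prop} {a : α} (h : R a a) (k : ℕ) :
    List.Chain' R (List.replicate k a) := by
  induction k with
  | zero => exact List.isChain_nil
  | succ k ih =>
    rw [List.replicate_succ]
    refine List.isChain_cons.mpr ⟨?_, ih⟩
    intro y hy
    cases k with
    | zero => simp at hy
    | succ k => rw [List.replicate_succ, List.head?_cons, Option.mem_some_iff] at hy; exact hy ▸ h

lemma ok2_rr (b : Bool) : ok2 (Sum.inr b) (Sum.inr b) := rfl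
lemma ok2_rl (b : Bool) (g : Perm') : ok2 (Sum.inr b) (Sum.inl g) := trivial
lemma ok2_lr (b : Bool) (g : Perm') : ok2 (Sum.inl g) (Sum.inr b) := trivial

lemma xpow_pos (k : ℤ) (hk : 0 < k) : xpow k = List.replicate k.toNat (Sum.inr true : Letter) := by
  rw [xpow, if_pos hk.le]

lemma xpow_neg (k : ℤ) (hk : k < 0) : xpow k = List.replicate (-k).toNat (Sum.inr false : Letter) := by
  rw [xpow, if_neg (by omega)]

lemma xpow_ne_nil (k : ℤ) (hk : k ≠ 0) : xpow k ≠ [] := by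
  rcases lt_or_gt_of_ne hk with h | h
  · rw [xpow_neg k h]; simp; omega
  · rw [xpow_pos k h]; simp; omega

lemma xpow_eq_replicate (k : ℤ) : ∃ (j : ℕ) (b : Bool), xpow k = List.replicate j (Sum.inr b : Letter) := by
  rcases le_or_gt 0 k with h | h
  · exact ⟨k.toNat, true, by rw [xpow, if_pos h]⟩
  · exact ⟨(-k).toNat, false, xpow_neg k h⟩

lemma blockWord_chain (p : Perm' × ℤ) : List.Chain' ok2 (blockWord p) := by
  obtain ⟨j, b, hj⟩ := xpow_eq_replicate p.2
  rw [blockWord, hj]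
  refine List.isChain_cons.mpr ⟨?_, chain'_replicate (ok2_rr b) j⟩
  intro y hy
  cases j with
  | zero => simp at hy
  | succ j =>
    rw [List.replicate_succ, List.head?_cons, Option.mem_some_iff] at hy
    exact hy ▸ ok2_lr b p.1

lemma blockWord_getLast (p : Perm' × ℤ) (hp : p.2 ≠ 0) :
    ∃ b, (blockWord p).getLast? = some (Sum.inr b : Letter) := by
  obtain ⟨j, b, hj⟩ := xpow_eq_replicate p.2
  cases j with
  | zero => exact absurd hj (by simpa using xpow_ne_nil p.2 hp)
  | succ j =>
    refine ⟨b, ?_⟩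
    rw [blockWord, hj, List.replicate_succ', ← List.cons_append]
    exact List.getLast?_concat

lemma flatten_chain (bs : List (Perm' × ℤ)) (h : ∀ p ∈ bs, p.2 ≠ 0) :
    List.Chain' ok2 (bs.map blockWord).flatten ∧
    (∀ q bs', bs = q :: bs' →
      (bs.map blockWord).flatten = Sum.inl q.1 :: (xpow q.2 ++ (bs'.map blockWord).flatten)) := by
  induction bs with
  | nil => exact ⟨by exact List.isChain_nil, by intro q bs' h; simp at h⟩
  | cons p bs ih =>
    have hbs : ∀ q ∈ bs, q.2 ≠ 0 := fun q hq => h q (List.mem_cons_of_mem _ hq)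
    obtain ⟨ihc, ihh⟩ := ih hbs
    constructor
    · rw [List.map_cons, List.flatten_cons]
      refine List.isChain_append.mpr ⟨blockWord_chain p, ihc, ?_⟩
      intro x hx y hy
      cases bs with
      | nil => simp at hy
      | cons q bs' =>
        rw [ihh q bs' rfl, List.head?_cons, Option.mem_some_iff] at hy
        obtain ⟨b, hb⟩ := blockWord_getLast p (h p List.mem_cons_self)
        rw [hb, Option.mem_some_iff] at hx
        rw [← hy, ← hx]
        exact ok2_rl b q.1
    · intro q bs' hq
      obtain ⟨rfl, rfl⟩ : p = q ∧ bs = bs' := by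
        constructor <;> injection hq
      simp [blockWord]

lemma nice_good {G : Subgroup Perm'} {w : Word} (h : IsNice G w) : GoodWord G w := by
  rcases h with ⟨k, hk, rfl⟩ | ⟨bs, hne, hmem, ⟨p, hlast, hpos⟩, rfl⟩
  · have hk' : (0:ℤ) ≤ (k:ℤ) := by exact_mod_cast Nat.zero_le k
    rw [xpow, if_pos hk']
    have hkn : (k:ℤ).toNat = k := Int.toNat_natCast k
    rw [hkn]
    refine ⟨⟨List.replicate (k-1) (Sum.inr true), ?_⟩, chain'_replicate (ok2_rr true) k, ?_, ?_⟩
    · rw [← List.replicate_succ' ]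
      congr 1; omega
    · intro u hu
      cases k with
      | zero => omega
      | succ k => rw [List.replicate_succ] at hu; simp at hu
    · intro g hg
      exfalso
      have := List.eq_of_mem_replicate hg
      simp at this
  · obtain ⟨bs', rfl⟩ := List.getLast?_eq_some_iff.mp hlast
    have hmem' : ∀ q ∈ bs' ++ [p], q.2 ≠ 0 := fun q hq => (hmem q hq).2.2
    refine ⟨?_, (flatten_chain (bs' ++ [p]) hmem').1, ?_, ?_⟩
    · -- ends with inr true
      rw [List.map_append, List.flatten_append]
      have : ∃ v, blockWord p = v ++ [Sum.inr true] := by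
        rw [blockWord, xpow_pos p.2 hpos]
        have h1 : p.2.toNat = (p.2.toNat - 1) + 1 := by omega
        rw [h1, List.replicate_succ']
        exact ⟨Sum.inl p.1 :: List.replicate (p.2.toNat - 1) (Sum.inr true), by simp⟩
      obtain ⟨v, hv⟩ := this
      simp only [List.map_cons, List.flatten_cons, List.map_nil, List.flatten_nil,
        List.append_nil, hv]
      exact ⟨(bs'.map blockWord).flatten ++ v, by rw [List.append_assoc]⟩
    · -- head is not inr false
      intro u hu
      rcases (bs' ++ [p]).exists_cons_of_ne_nil (by simp) with ⟨q, bs'', hq⟩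
      rw [(flatten_chain (bs' ++ [p]) hmem').2 q bs'' hq] at hu
      exact absurd (by injection hu) (by simp : (Sum.inl q.1 : Letter) ≠ Sum.inr false)
    · -- letters
      intro g hg
      rw [List.mem_flatten] at hg
      obtain ⟨l, hl, hgl⟩ := hg
      rw [List.mem_map] at hl
      obtain ⟨q, hq, rfl⟩ := hl
      rw [blockWord] at hgl
      rcases List.mem_cons.mp hgl with h1 | h1
      · obtain rfl : g = q.1 := by injection h1
        exact ⟨(hmem q hq).1, (hmem q hq).2.1⟩
      · obtain ⟨j, b, hj⟩ := xpow_eq_replicate q.2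
        rw [hj] at h1
        have := List.eq_of_mem_replicate h1
        simp at this

end Structure
section Core

variable {s : Set (ℕ×ℕ)} {GS : Set Perm'} {n m : ℕ}

lemma mem_insert_pair {s : Set (ℕ×ℕ)} {n m d c : ℕ} :
    ((d,c) ∈ insert (n,m) s) ↔ (d = n ∧ c = m) ∨ (d,c) ∈ s := by
  simp [Set.mem_insert_iff, Prod.ext_iff]

lemma perm_pre {g : Perm'} {d mm : ℕ} (h : g d = mm) : d = g⁻¹ mm := by
  rw [← h]; exact (Equiv.symm_apply_apply g d).symm

/-- The finitely many values that can be hit by a bad computation (dom-extension case). -/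
def A1 (GS : Set Perm') (m : ℕ) (a : ℕ) : Prop :=
  a = m ∨ ∃ g ∈ GS, a = g m ∨ a = g⁻¹ m

lemma not_ok2_ft : ¬ ok2 (Sum.inr false : Letter) (Sum.inr true) := fun h => Bool.noConfusion h
lemma not_ok2_tf : ¬ ok2 (Sum.inr true : Letter) (Sum.inr false) := fun h => Bool.noConfusion h

lemma wordRel_single {s : Set (ℕ×ℕ)} {l : Letter} {a b : ℕ} :
    wordRel s [l] a b ↔ letterRel s l a b := by
  constructor
  · rintro ⟨c, hc, hl⟩
    have : a = c := hc
    exact this ▸ hl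
  · intro h
    exact ⟨a, rfl, h⟩

lemma helper1 (hmd : m ∉ pdom s) (hmr : m ∉ pran s)
    (hg : ∀ g ∈ GS, g⁻¹ m ∉ pdom s ∧ g⁻¹ m ∉ pran s) :
    ∀ u : Word, List.Chain' ok2 u → (∀ g : Perm', Sum.inl g ∈ u → g ∈ GS) →
    ∀ a, ¬ A1 GS m a → wordRel s u a m → False := by
  intro u hch hsc a ha h
  rcases u with _ | ⟨l, u⟩
  · exact ha (Or.inl h)
  · obtain ⟨d, hd, hl⟩ := h
    rcases l with g | b
    · have hgGS : g ∈ GS := hsc g (by simp)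
      obtain rfl : d = g⁻¹ m := perm_pre hl
      rcases u with _ | ⟨l', u'⟩
      · exact ha (Or.inr ⟨g, hgGS, Or.inr hd⟩)
      · obtain ⟨e, he, hl'⟩ := hd
        rcases l' with g' | b'
        · exact ((List.isChain_cons_cons.mp hch).1)
        · cases b'
          · exact (hg g hgGS).1 (mem_pdom hl')
          · exact (hg g hgGS).2 (mem_pran hl')
    · cases b
      · exact hmd (mem_pdom hl)
      · exact hmr (mem_pran hl)

lemma claim1 (hmd : m ∉ pdom s) (hmr : m ∉ pran s) (hmn : m ≠ n)
    (hg : ∀ g ∈ GS, (g m ∉ pdom s ∧ g m ∉ pran s ∧ g m ≠ n ∧ g m ≠ m) ∧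
      (g⁻¹ m ∉ pdom s ∧ g⁻¹ m ∉ pran s ∧ g⁻¹ m ≠ n ∧ g⁻¹ m ≠ m)) :
    ∀ u : Word, List.Chain' ok2 u → (∀ g : Perm', Sum.inl g ∈ u → g ∈ GS) →
    ∀ a c, ¬ A1 GS m a → wordRel (insert (n,m) s) u a c →
      wordRel s u a c ∨ (∃ u₁, u = Sum.inr true :: u₁ ∧ c = m) ∨
      (∃ g u₁, g ∈ GS ∧ u = Sum.inl g :: Sum.inr true :: u₁ ∧ c = g m) := by
  intro u
  induction u with
  | nil => intro _ _ a c ha h; exact Or.inl h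
  | cons l u ih =>
    intro hch hsc a c ha h
    obtain ⟨d, hd, hl⟩ := h
    rcases ih hch.tail (fun g hg' => hsc g (List.mem_cons_of_mem _ hg')) a d ha hd with
      hi | ⟨u₁, rfl, rfl⟩ | ⟨g, u₁, hgGS, rfl, rfl⟩
    · rcases l with g | b
      · exact Or.inl ⟨d, hi, hl⟩
      · cases b
        · rcases mem_insert_pair.mp hl with ⟨hc, hdm⟩ | hs
          · subst hdm
            exact (helper1 hmd hmr (fun g hgg => ⟨((hg g hgg).2.1), (hg g hgg).2.2.1⟩)
              u hch.tail (fun g hg' => hsc g (List.mem_cons_of_mem _ hg')) a ha hi).elim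
          · exact Or.inl ⟨d, hi, hs⟩
        · rcases mem_insert_pair.mp hl with ⟨rfl, rfl⟩ | hs
          · exact Or.inr (Or.inl ⟨u, rfl, rfl⟩)
          · exact Or.inl ⟨d, hi, hs⟩
    · -- case (ii): u = inr true :: u₁, value so far is m
      rcases l with g | b
      · exact Or.inr (Or.inr ⟨g, u₁, hsc g (by simp), rfl, hl.symm⟩)
      · cases b
        · rcases mem_insert_pair.mp hl with ⟨h1, h2⟩ | hs
          · exact absurd ((List.isChain_cons_cons.mp hch).1) not_ok2_ft
          · exact absurd (mem_pran hs) hmr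
        · rcases mem_insert_pair.mp hl with ⟨h1, _⟩ | hs
          · exact absurd h1 hmn
          · exact absurd (mem_pdom hs) hmd
    · -- case (iii): u = inl g :: inr true :: u₁, value so far is g m
      rcases l with g' | b
      · exact ((List.isChain_cons_cons.mp hch).1).elim
      · cases b
        · rcases mem_insert_pair.mp hl with ⟨h1, h2⟩ | hs
          · exact absurd h2 ((hg g hgGS).1.2.2.2)
          · exact absurd (mem_pran hs) (hg g hgGS).1.2.1
        · rcases mem_insert_pair.mp hl with ⟨h1, _⟩ | hs
          · exact absurd h1 ((hg g hgGS).1.2.2.1)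
          · exact absurd (mem_pdom hs) (hg g hgGS).1.1

lemma fix1 (hmd : m ∉ pdom s) (hmr : m ∉ pran s) (hmn : m ≠ n)
    (hg : ∀ g ∈ GS, (g m ∉ pdom s ∧ g m ∉ pran s ∧ g m ≠ n ∧ g m ≠ m) ∧
      (g⁻¹ m ∉ pdom s ∧ g⁻¹ m ∉ pran s ∧ g⁻¹ m ≠ n ∧ g⁻¹ m ≠ m))
    (w : Word) (hw1 : ∃ w', w = w' ++ [Sum.inr true])
    (hch : List.Chain' ok2 w) (hsc : ∀ g : Perm', Sum.inl g ∈ w → g ∈ GS) :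
    wordFix (insert (n,m) s) w = wordFix s w := by
  apply Set.Subset.antisymm
  · intro a hafix
    have hafix' : wordRel (insert (n,m) s) w a a := hafix
    by_cases ha : A1 GS m a
    · exfalso
      obtain ⟨w', rfl⟩ := hw1
      rw [wordRel_append] at hafix'
      obtain ⟨c, h1, _⟩ := hafix'
      rw [wordRel_single] at h1
      have hl' : (a, c) ∈ insert (n,m) s := h1
      rcases ha with rfl | ⟨g, hgGS, rfl | rfl⟩
      · rcases mem_insert_pair.mp hl' with ⟨rfl, _⟩ | hh
        · exact hmn rfl
        · exact hmd (mem_pdom hh)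
      · rcases mem_insert_pair.mp hl' with ⟨h1, _⟩ | hh
        · exact (hg g hgGS).1.2.2.1 h1
        · exact (hg g hgGS).1.1 (mem_pdom hh)
      · rcases mem_insert_pair.mp hl' with ⟨h1, _⟩ | hh
        · exact (hg g hgGS).2.2.2.1 h1
        · exact (hg g hgGS).2.1 (mem_pdom hh)
    · rcases claim1 hmd hmr hmn hg w hch hsc a a ha hafix' with
        hi | ⟨u₁, _, rfl⟩ | ⟨g, u₁, hgGS, _, rfl⟩
      · exact hi
      · exact absurd (Or.inl rfl) ha
      · exact absurd (Or.inr ⟨g, hgGS, Or.inl rfl⟩) ha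
  · intro a h
    exact wordRel_mono (Set.subset_insert _ _) w a a h

end Core
section Core2

variable {s : Set (ℕ×ℕ)} {GS : Set Perm'} {n m : ℕ}

/-- The finitely many values that can be hit by a bad computation (ran-extension case). -/
def A2 (GS : Set Perm') (n : ℕ) (a : ℕ) : Prop :=
  ∃ g ∈ GS, a = g n ∨ a = g⁻¹ n

lemma helperN (hnd : n ∉ pdom s) (hnr : n ∉ pran s)
    (hg : ∀ g ∈ GS, g⁻¹ n ∉ pdom s ∧ g⁻¹ n ∉ pran s) :
    ∀ u : Word, List.Chain' ok2 u → (∀ g : Perm', Sum.inl g ∈ u → g ∈ GS) →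
    ∀ a, (∀ g ∈ GS, a ≠ g⁻¹ n) → wordRel s u a n → u = [] ∧ a = n := by
  intro u hch hsc a ha h
  rcases u with _ | ⟨l, u⟩
  · exact ⟨rfl, h⟩
  · exfalso
    obtain ⟨d, hd, hl⟩ := h
    rcases l with g | b
    · have hgGS : g ∈ GS := hsc g (by simp)
      obtain rfl : d = g⁻¹ n := perm_pre hl
      rcases u with _ | ⟨l', u'⟩
      · exact ha g hgGS hd
      · obtain ⟨e, he, hl'⟩ := hd
        rcases l' with g' | b'
        · exact (List.isChain_cons_cons.mp hch).1
        · cases b'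
          · exact (hg g hgGS).1 (mem_pdom hl')
          · exact (hg g hgGS).2 (mem_pran hl')
    · cases b
      · exact hnd (mem_pdom hl)
      · exact hnr (mem_pran hl)

lemma claim2 (hnd : n ∉ pdom s) (hnr : n ∉ pran s) (hnm : n ≠ m)
    (hg : ∀ g ∈ GS, (g n ∉ pdom s ∧ g n ∉ pran s ∧ g n ≠ n ∧ g n ≠ m) ∧
      (g⁻¹ n ∉ pdom s ∧ g⁻¹ n ∉ pran s ∧ g⁻¹ n ≠ n ∧ g⁻¹ n ≠ m)) :
    ∀ u : Word, List.Chain' ok2 u → (∀ g : Perm', Sum.inl g ∈ u → g ∈ GS) →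
    ∀ a c, ¬ A2 GS n a → wordRel (insert (n,m) s) u a c →
      wordRel s u a c
      ∨ (∃ u₁, u = u₁ ++ [Sum.inr true] ∧ a = n ∧ wordRel s u₁ m c)
      ∨ (∃ u₁, u = Sum.inr false :: u₁ ++ [Sum.inr true] ∧ a = n ∧ c = n)
      ∨ (∃ g u₁, g ∈ GS ∧ u = Sum.inl g :: Sum.inr false :: u₁ ++ [Sum.inr true] ∧
          a = n ∧ c = g n)
      ∨ (∃ u₁, u = Sum.inr false :: u₁ ∧ c = n ∧ wordRel s u₁ a m)
      ∨ (∃ g u₁, g ∈ GS ∧ u = Sum.inl g :: Sum.inr false :: u₁ ∧ c = g n ∧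
          wordRel s u₁ a m) := by
  intro u
  induction u with
  | nil => intro _ _ a c ha h; exact Or.inl h
  | cons l u ih =>
    intro hch hsc a c ha h
    obtain ⟨d, hd, hl⟩ := h
    have hscu : ∀ g : Perm', Sum.inl g ∈ u → g ∈ GS :=
      fun g hg' => hsc g (List.mem_cons_of_mem _ hg')
    have hgn' : ∀ g ∈ GS, g⁻¹ n ∉ pdom s ∧ g⁻¹ n ∉ pran s :=
      fun g hgg => ⟨(hg g hgg).2.1, (hg g hgg).2.2.1⟩
    rcases ih hch.tail hscu a d ha hd with
      hi | ⟨u₁, hue, han, hrel⟩ | ⟨u₁, hue, han, hdn⟩ |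
      ⟨g, u₁, hgGS, hue, han, hdgn⟩ | ⟨u₁, hue, hdn, hrel⟩ | ⟨g, u₁, hgGS, hue, hdgn, hrel⟩
    · -- (I)
      rcases l with g | b
      · exact Or.inl ⟨d, hi, hl⟩
      · cases b
        · -- inr false : (c, d) ∈ t
          rcases mem_insert_pair.mp hl with ⟨h1, h2⟩ | hs
          · subst h1; subst h2
            exact Or.inr (Or.inr (Or.inr (Or.inr (Or.inl ⟨u, rfl, rfl, hi⟩))))
          · exact Or.inl ⟨d, hi, hs⟩
        · -- inr true : (d, c) ∈ t
          rcases mem_insert_pair.mp hl with ⟨h1, h2⟩ | hs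
          · subst h1
            obtain ⟨rfl, rfl⟩ := helperN hnd hnr hgn' u hch.tail hscu a
              (fun g hgg hh => ha ⟨g, hgg, Or.inr hh⟩) hi
            exact Or.inr (Or.inl ⟨[], by simp, rfl, h2.symm⟩)
          · exact Or.inl ⟨d, hi, hs⟩
    · -- (II)
      subst hue
      rcases l with g | b
      · exact Or.inr (Or.inl ⟨Sum.inl g :: u₁, rfl, han, d, hrel, hl⟩)
      · cases b
        · rcases mem_insert_pair.mp hl with ⟨h1, h2⟩ | hs
          · subst h1; subst h2
            exact Or.inr (Or.inr (Or.inl ⟨u₁, rfl, han, rfl⟩))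
          · exact Or.inr (Or.inl ⟨Sum.inr false :: u₁, rfl, han, d, hrel, hs⟩)
        · rcases mem_insert_pair.mp hl with ⟨h1, h2⟩ | hs
          · subst h1
            obtain ⟨_, hmn'⟩ := helperN hnd hnr hgn' u₁
              (List.IsChain.prefix hch.tail ⟨[Sum.inr true], rfl⟩)
              (fun g hg' => hscu g (List.mem_append_left _ hg')) m
              (fun g hgg hh => (hg g hgg).2.2.2.2 hh.symm) hrel
            exact absurd hmn'.symm hnm
          · exact Or.inr (Or.inl ⟨Sum.inr true :: u₁, rfl, han, d, hrel, hs⟩)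
    · -- (III)
      subst hue; subst hdn
      rcases l with g | b
      · exact Or.inr (Or.inr (Or.inr (Or.inl ⟨g, u₁, hsc g (by simp), rfl, han, hl.symm⟩)))
      · cases b
        · rcases mem_insert_pair.mp hl with ⟨h1, h2⟩ | hs
          · exact absurd h2 hnm
          · exact absurd (mem_pran hs) hnr
        · rcases mem_insert_pair.mp hl with ⟨h1, h2⟩ | hs
          · exact absurd ((List.isChain_cons_cons.mp hch).1) not_ok2_tf
          · exact absurd (mem_pdom hs) hnd
    · -- (IV)
      subst hue; subst hdgn
      rcases l with g' | b
      · exact ((List.isChain_cons_cons.mp hch).1).elim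
      · cases b
        · rcases mem_insert_pair.mp hl with ⟨h1, h2⟩ | hs
          · exact absurd h2 ((hg g hgGS).1.2.2.2)
          · exact absurd (mem_pran hs) ((hg g hgGS).1.2.1)
        · rcases mem_insert_pair.mp hl with ⟨h1, h2⟩ | hs
          · exact absurd h1 ((hg g hgGS).1.2.2.1)
          · exact absurd (mem_pdom hs) ((hg g hgGS).1.1)
    · -- (V)
      subst hue; subst hdn
      rcases l with g | b
      · exact Or.inr (Or.inr (Or.inr (Or.inr (Or.inr
          ⟨g, u₁, hsc g (by simp), rfl, hl.symm, hrel⟩))))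
      · cases b
        · rcases mem_insert_pair.mp hl with ⟨h1, h2⟩ | hs
          · exact absurd h2 hnm
          · exact absurd (mem_pran hs) hnr
        · rcases mem_insert_pair.mp hl with ⟨h1, h2⟩ | hs
          · exact absurd ((List.isChain_cons_cons.mp hch).1) not_ok2_tf
          · exact absurd (mem_pdom hs) hnd
    · -- (VI)
      subst hue; subst hdgn
      rcases l with g' | b
      · exact ((List.isChain_cons_cons.mp hch).1).elim
      · cases b
        · rcases mem_insert_pair.mp hl with ⟨h1, h2⟩ | hs
          · exact absurd h2 ((hg g hgGS).1.2.2.2)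
          · exact absurd (mem_pran hs) ((hg g hgGS).1.2.1)
        · rcases mem_insert_pair.mp hl with ⟨h1, h2⟩ | hs
          · exact absurd h1 ((hg g hgGS).1.2.2.1)
          · exact absurd (mem_pdom hs) ((hg g hgGS).1.1)

lemma fix2 (hnd : n ∉ pdom s) (hnr : n ∉ pran s) (hnm : n ≠ m)
    (hg : ∀ g ∈ GS, (g n ∉ pdom s ∧ g n ∉ pran s ∧ g n ≠ n ∧ g n ≠ m) ∧
      (g⁻¹ n ∉ pdom s ∧ g⁻¹ n ∉ pran s ∧ g⁻¹ n ≠ n ∧ g⁻¹ n ≠ m))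
    (w : Word) (hw1 : ∃ w', w = w' ++ [Sum.inr true])
    (hch : List.Chain' ok2 w) (hw3 : ∀ u, w ≠ Sum.inr false :: u)
    (hsc : ∀ g : Perm', Sum.inl g ∈ w → g ∈ GS) :
    wordFix (insert (n,m) s) w = wordFix s w := by
  apply Set.Subset.antisymm
  · intro a hafix
    have hafix' : wordRel (insert (n,m) s) w a a := hafix
    by_cases ha : A2 GS n a
    · exfalso
      obtain ⟨w', rfl⟩ := hw1
      rw [wordRel_append] at hafix'
      obtain ⟨c, h1, _⟩ := hafix'
      rw [wordRel_single] at h1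
      have hl' : (a, c) ∈ insert (n,m) s := h1
      obtain ⟨g, hgGS, rfl | rfl⟩ := ha
      · rcases mem_insert_pair.mp hl' with ⟨h1, _⟩ | hh
        · exact (hg g hgGS).1.2.2.1 h1
        · exact (hg g hgGS).1.1 (mem_pdom hh)
      · rcases mem_insert_pair.mp hl' with ⟨h1, _⟩ | hh
        · exact (hg g hgGS).2.2.2.1 h1
        · exact (hg g hgGS).2.1 (mem_pdom hh)
    · rcases claim2 hnd hnr hnm hg w hch hsc a a ha hafix' with
        hi | ⟨u₁, hue, han, hrel⟩ | ⟨u₁, hue, _, _⟩ |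
        ⟨g, u₁, hgGS, hue, han, hagn⟩ | ⟨u₁, hue, _, _⟩ | ⟨g, u₁, hgGS, hue, hagn, _⟩
      · exact hi
      · exfalso
        subst han
        obtain ⟨_, hmn'⟩ := helperN hnd hnr
          (fun g hgg => ⟨(hg g hgg).2.1, (hg g hgg).2.2.1⟩) u₁
          (List.IsChain.prefix (hue ▸ hch) ⟨[Sum.inr true], rfl⟩)
          (fun g hg' => hsc g (hue ▸ List.mem_append_left _ hg')) m
          (fun g hgg hh => (hg g hgg).2.2.2.2 hh.symm) hrel
        exact hnm hmn'.symm
      · exact absurd hue (hw3 _)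
      · exact absurd (hagn.symm.trans han) ((hg g hgGS).1.2.2.1)
      · exact absurd hue (hw3 _)
      · exact absurd ⟨g, hgGS, Or.inl hagn⟩ ha
  · intro a h
    exact wordRel_mono (Set.subset_insert _ _) w a a h

end Core2
section Orbits

def relPow (R : ℕ → ℕ → Prop) : ℕ → ℕ → ℕ → Prop
  | 0, a, b => a = b
  | (p+1), a, b => ∃ c, relPow R p a c ∧ R c b

lemma relPow_add (R : ℕ → ℕ → Prop) (i j : ℕ) : ∀ (a b : ℕ),
    relPow R (i + j) a b ↔ ∃ c, relPow R j a c ∧ relPow R i c b := by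
  induction i with
  | zero =>
    intro a b
    rw [Nat.zero_add]
    exact ⟨fun h => ⟨b, h, rfl⟩, fun ⟨c, hc, h⟩ => h ▸ hc⟩
  | succ i ih =>
    intro a b
    rw [Nat.succ_add]
    constructor
    · rintro ⟨c, hc, hR⟩
      obtain ⟨e, he, he'⟩ := (ih a c).mp hc
      exact ⟨e, he, c, he', hR⟩
    · rintro ⟨c, hc, e, he, hR⟩
      exact ⟨e, (ih a e).mpr ⟨c, hc, he⟩, hR⟩

lemma wpow_succ (v : Word) (p : ℕ) : wpow v (p+1) = v ++ wpow v p := by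
  rw [wpow, wpow, List.replicate_succ, List.flatten_cons]

lemma wordRel_wpow (s : Set (ℕ×ℕ)) (v : Word) : ∀ (p : ℕ) (a b : ℕ),
    wordRel s (wpow v p) a b ↔ relPow (wordRel s v) p a b := by
  intro p
  induction p with
  | zero => intro a b; exact Iff.rfl
  | succ p ih =>
    intro a b
    rw [wpow_succ, wordRel_append]
    exact ⟨fun ⟨c, hc, h⟩ => ⟨c, (ih a c).mp hc, h⟩, fun ⟨c, hc, h⟩ => ⟨c, (ih a c).mpr hc, h⟩⟩

lemma mem_relDom {R : ℕ → ℕ → Prop} {b : ℕ} : b ∈ relDom R ↔ ∃ c, R b c := Iff.rfl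
lemma mem_relRan {R : ℕ → ℕ → Prop} {c : ℕ} : c ∈ relRan R ↔ ∃ b, R b c := Iff.rfl

lemma relClosed_sInter {R : ℕ → ℕ → Prop} {S : Set (Set ℕ)} (h : ∀ O ∈ S, RelClosed R O) :
    RelClosed R (⋂₀ S) := by
  intro a b hab
  simp only [Set.mem_sInter]
  exact ⟨fun hh O hO => (h O hO a b hab).mp (hh O hO),
         fun hh O hO => (h O hO a b hab).mpr (hh O hO)⟩

lemma mem_relOrbit_self (R : ℕ → ℕ → Prop) (a : ℕ) : a ∈ relOrbit R a :=
  Set.mem_sInter.mpr (fun _ hO => hO.1)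

lemma relOrbit_closed (R : ℕ → ℕ → Prop) (a : ℕ) : RelClosed R (relOrbit R a) :=
  relClosed_sInter (fun _ hO => hO.2)

lemma relOrbit_subset {R : ℕ → ℕ → Prop} {a : ℕ} {O : Set ℕ} (haO : a ∈ O)
    (hO : RelClosed R O) : relOrbit R a ⊆ O :=
  Set.sInter_subset_of_mem ⟨haO, hO⟩

lemma relClosed_mono {R R' : ℕ → ℕ → Prop} (h : ∀ a b, R a b → R' a b) {O : Set ℕ}
    (hO : RelClosed R' O) : RelClosed R O :=
  fun a b hab => hO a b (h a b hab)

lemma orbit_stepup {R R' : ℕ → ℕ → Prop} (hsub : ∀ a b, R a b → R' a b)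
    (hf' : RelFunc R') {O : Set ℕ} (hO : O ∈ relClosedOrbits R) :
    O ∈ relClosedOrbits R' := by
  obtain ⟨⟨a, ha⟩, hdr⟩ := hO
  subst ha
  have hcl : RelClosed R (relOrbit R a) := relOrbit_closed R a
  have hcl' : RelClosed R' (relOrbit R a) := by
    intro b c hbc
    constructor
    · intro hb
      obtain ⟨c', hc'⟩ := mem_relDom.mp (hdr hb).1
      obtain rfl : c = c' := hf'.1 hbc (hsub _ _ hc')
      exact (hcl b c hc').mp hb
    · intro hc
      obtain ⟨b', hb'⟩ := mem_relRan.mp (hdr hc).2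
      obtain rfl : b = b' := hf'.2 hbc (hsub _ _ hb')
      exact (hcl b c hb').mpr hc
  have heq : relOrbit R' a = relOrbit R a :=
    Set.Subset.antisymm
      (relOrbit_subset (mem_relOrbit_self R a) hcl')
      (relOrbit_subset (mem_relOrbit_self R' a) (relClosed_mono hsub (relOrbit_closed R' a)))
  refine ⟨⟨a, heq.symm⟩, fun b hb => ⟨?_, ?_⟩⟩
  · obtain ⟨c, hc⟩ := mem_relDom.mp (hdr hb).1
    exact mem_relDom.mpr ⟨c, hsub _ _ hc⟩
  · obtain ⟨c, hc⟩ := mem_relRan.mp (hdr hb).2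
    exact mem_relRan.mpr ⟨c, hsub _ _ hc⟩

lemma orbit_stepdown {R R' : ℕ → ℕ → Prop} (hsub : ∀ a b, R a b → R' a b)
    (hf' : RelFunc R') {p : ℕ} (hp : 0 < p)
    (hfix : ∀ a, relPow R' p a a → relPow R p a a)
    {O : Set ℕ} (hO : O ∈ relClosedOrbits R') (hcard : O.ncard = p) :
    O ∈ relClosedOrbits R := by
  classical
  obtain ⟨⟨a₀, ha₀⟩, hdr⟩ := hO
  subst ha₀
  set O := relOrbit R' a₀ with hOdef
  have ha₀O : a₀ ∈ O := mem_relOrbit_self R' a₀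
  have hfin : O.Finite := by
    by_contra h
    rw [Set.Infinite.ncard h] at hcard
    omega
  set f : ℕ → ℕ := fun b => if h : ∃ c, R' b c then h.choose else 0 with hfdef
  have hfR : ∀ b ∈ O, R' b (f b) := by
    intro b hb
    have h : ∃ c, R' b c := mem_relDom.mp (hdr hb).1
    simp only [hfdef, dif_pos h]
    exact h.choose_spec
  have hcl' : RelClosed R' O := relOrbit_closed R' a₀
  have hmaps : ∀ b ∈ O, f b ∈ O := fun b hb => (hcl' b (f b) (hfR b hb)).mp hb
  have hiter : ∀ b ∈ O, ∀ j, f^[j] b ∈ O := by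
    intro b hb j
    induction j with
    | zero => simpa using hb
    | succ j ih => rw [Function.iterate_succ_apply']; exact hmaps _ ih
  have hpow' : ∀ b ∈ O, ∀ j, relPow R' j b (f^[j] b) := by
    intro b hb j
    induction j with
    | zero => rfl
    | succ j ih =>
      rw [Function.iterate_succ_apply']
      exact ⟨f^[j] b, ih, hfR _ (hiter b hb j)⟩
  have hinj : ∀ b ∈ O, ∀ c ∈ O, f b = f c → b = c := by
    intro b hb c hc h
    exact hf'.2 (hfR b hb) (h ▸ hfR c hc)
  have hcancel : ∀ (i : ℕ) (b c : ℕ), b ∈ O → c ∈ O → f^[i] b = f^[i] c → b = c := by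
    intro i
    induction i with
    | zero => intro b c _ _ h; simpa using h
    | succ i ih =>
      intro b c hb hc h
      rw [Function.iterate_succ_apply, Function.iterate_succ_apply] at h
      exact hinj b hb c hc (ih (f b) (f c) (hmaps b hb) (hmaps c hc) h)
  -- pigeonhole: some positive period ≤ p exists
  have hper₀ : ∃ k, 0 < k ∧ f^[k] a₀ = a₀ := by
    have hmapsto : ∀ i ∈ Finset.range (p+1), f^[i] a₀ ∈ hfin.toFinset := by
      intro i _
      rw [Set.Finite.mem_toFinset]
      exact hiter a₀ ha₀O i
    have hcardlt : hfin.toFinset.card < (Finset.range (p+1)).card := by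
      rw [Finset.card_range, ← Set.ncard_eq_toFinset_card O hfin, hcard]
      omega
    obtain ⟨x, hx, y, hy, hxy, hfxy⟩ :=
      Finset.exists_ne_map_eq_of_card_lt_of_maps_to hcardlt hmapsto
    obtain ⟨i, j, hij, hfij⟩ : ∃ i j, i < j ∧ f^[i] a₀ = f^[j] a₀ := by
      rcases Nat.lt_or_ge x y with h | h
      · exact ⟨x, y, h, hfxy⟩
      · exact ⟨y, x, by omega, hfxy.symm⟩
    refine ⟨j - i, by omega, hcancel i (f^[j-i] a₀) a₀ (hiter a₀ ha₀O _) ha₀O ?_⟩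
    rw [← Function.iterate_add_apply, show i + (j - i) = j from by omega]
    exact hfij.symm
  set d₀ := Nat.find hper₀ with hd₀def
  obtain ⟨hd₀pos, hd₀per⟩ := Nat.find_spec hper₀
  have hmod : ∀ q r : ℕ, f^[d₀ * q + r] a₀ = f^[r] a₀ := by
    intro q r
    induction q with
    | zero => simp
    | succ q ih =>
      rw [show d₀ * (q+1) + r = (d₀ * q + r) + d₀ by ring, Function.iterate_add_apply,
        hd₀per, ih]
  have hmod' : ∀ j, f^[j] a₀ = f^[j % d₀] a₀ := by
    intro j
    have h := hmod (j / d₀) (j % d₀)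
    rwa [Nat.div_add_mod] at h
  set C : Set ℕ := {b | ∃ j, b = f^[j] a₀} with hCdef
  have haC : a₀ ∈ C := ⟨0, rfl⟩
  have hCO : C ⊆ O := by rintro b ⟨j, rfl⟩; exact hiter a₀ ha₀O j
  have hCcl : RelClosed R' C := by
    intro b c hbc
    constructor
    · rintro ⟨j, rfl⟩
      have hc : c = f (f^[j] a₀) := hf'.1 hbc (hfR _ (hiter a₀ ha₀O j))
      exact ⟨j+1, by rw [Function.iterate_succ_apply']; exact hc⟩
    · rintro ⟨j, rfl⟩
      refine ⟨j + d₀ - 1, hf'.2 hbc ?_⟩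
      have h1 : f (f^[j + d₀ - 1] a₀) = f^[j] a₀ := by
        have e1 := Function.iterate_succ_apply' f (j + d₀ - 1) a₀
        rw [Nat.succ_eq_add_one, show j + d₀ - 1 + 1 = j + d₀ from by omega, Function.iterate_add_apply,
          hd₀per] at e1
        exact e1.symm
      rw [← h1]
      exact hfR _ (hiter a₀ ha₀O _)
  have hCeq : C = O := Set.Subset.antisymm hCO (hOdef ▸ relOrbit_subset haC hCcl)
  have key : ∀ i j : ℕ, i < j → j < d₀ → f^[i] a₀ = f^[j] a₀ → False := by
    intro i j hij hjd hf2
    have hper : f^[j - i] a₀ = a₀ := hcancel i _ _ (hiter a₀ ha₀O _) ha₀O (by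
      rw [← Function.iterate_add_apply, show i + (j - i) = j from by omega]
      exact hf2.symm)
    exact Nat.find_min hper₀ (show j - i < d₀ from by omega) ⟨by omega, hper⟩
  have hinjIo : Set.InjOn (fun j => f^[j] a₀) (Set.Iio d₀) := by
    intro i hi j hj h
    rcases Nat.lt_trichotomy i j with h1 | h1 | h1
    · exact absurd h (fun hh => key i j h1 hj hh)
    · exact h1
    · exact absurd h.symm (fun hh => key j i h1 hi hh)
  have hCcard : C.ncard = d₀ := by
    have himg : C = (fun j => f^[j] a₀) '' (Set.Iio d₀) := by
      ext b
      constructor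
      · rintro ⟨j, rfl⟩
        exact ⟨j % d₀, Nat.mod_lt _ hd₀pos, (hmod' j).symm⟩
      · rintro ⟨j, _, rfl⟩
        exact ⟨j, rfl⟩
    rw [himg, Set.ncard_image_of_injOn hinjIo, ← Finset.coe_range,
      Set.ncard_coe_finset, Finset.card_range]
  have hd₀p : d₀ = p := by
    rw [hCeq, hcard] at hCcard
    omega
  have hfp : ∀ a ∈ O, f^[p] a = a := by
    intro a haO'
    rw [← hCeq] at haO'
    obtain ⟨j, rfl⟩ := haO'
    have hper' : f^[p] a₀ = a₀ := by rw [← hd₀p]; exact hd₀per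
    rw [← Function.iterate_add_apply, Nat.add_comm, Function.iterate_add_apply, hper']
  have hRstep : ∀ a ∈ O, R a (f a) := by
    intro a haO'
    have h1 : relPow R' p a a := by
      have h2 := hpow' a haO' p
      rwa [hfp a haO'] at h2
    have h2 := hfix a h1
    obtain ⟨q, hq⟩ : ∃ q, p = q + 1 := ⟨p - 1, by omega⟩
    rw [hq] at h2
    obtain ⟨c, hc1, _⟩ := (relPow_add R q 1 a a).mp h2
    have hc1' : R a c := by
      obtain ⟨e, he, hR⟩ := hc1
      exact (show a = e from he) ▸ hR
    obtain rfl : c = f a := hf'.1 (hsub _ _ hc1') (hfR a haO')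
    exact hc1'
  have hclR : RelClosed R O := relClosed_mono hsub hcl'
  have horb : relOrbit R a₀ = O := by
    apply Set.Subset.antisymm (relOrbit_subset ha₀O hclR)
    rw [← hCeq]
    have hall : ∀ j, f^[j] a₀ ∈ relOrbit R a₀ := by
      intro j
      induction j with
      | zero => exact mem_relOrbit_self R a₀
      | succ j ih =>
        rw [Function.iterate_succ_apply']
        exact (relOrbit_closed R a₀ _ _ (hRstep _ (hiter a₀ ha₀O j))).mp ih
    rintro b ⟨j, rfl⟩
    exact hall j
  refine ⟨⟨a₀, horb.symm⟩, fun a haO' => ⟨mem_relDom.mpr ⟨f a, hRstep a haO'⟩, ?_⟩⟩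
  obtain ⟨q, hq⟩ : ∃ q, p = q + 1 := ⟨p - 1, by omega⟩
  refine mem_relRan.mpr ⟨f^[q] a, ?_⟩
  have h1 : f (f^[q] a) = a := by
    have e1 := Function.iterate_succ_apply' f q a
    rw [Nat.succ_eq_add_one, ← hq] at e1
    rw [← e1]
    exact hfp a haO'
  have h2 := hRstep _ (hiter a haO' q)
  rwa [h1] at h2

lemma closed_orbits_card_eq {R R' : ℕ → ℕ → Prop} (hsub : ∀ a b, R a b → R' a b)
    (hf' : RelFunc R') {p : ℕ} (hp : 0 < p)
    (hfix : ∀ a, relPow R' p a a → relPow R p a a) :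
    {O ∈ relClosedOrbits R' | O.ncard = p} = {O ∈ relClosedOrbits R | O.ncard = p} := by
  ext O
  constructor
  · rintro ⟨h1, h2⟩
    exact ⟨orbit_stepdown hsub hf' hp hfix h1 h2, h2⟩
  · rintro ⟨h1, h2⟩
    exact ⟨orbit_stepup hsub hf' h1, h2⟩

end Orbits
section Assemble

lemma perm_inv_fix {g : Perm'} {m : ℕ} (h : g⁻¹ m = m) : g m = m := by
  have h2 := congrArg g h
  rw [← Equiv.Perm.mul_apply, mul_inv_cancel, Equiv.Perm.one_apply] at h2
  exact h2.symm

lemma assemble (G : Subgroup Perm') (r : ℕ → Fin 2) (s : Set (ℕ×ℕ)) (E : Set Word)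
    (hc : ZdagCond G r s E) (n m : ℕ) (htinj : PartInj (insert (n,m) s))
    (hfixall : ∀ w ∈ E, wordFix (insert (n,m) s) w = wordFix s w) :
    ZdagCond G r (insert (n,m) s) E ∧ ZLe (insert (n,m) s) E s E := by
  obtain ⟨⟨hsfin, hsinj, hEfin, hEnice⟩, hcyc, hdag⟩ := hc
  refine ⟨⟨⟨hsfin.insert _, htinj, hEfin, hEnice⟩, hcyc, ?_⟩,
    Set.subset_insert _ _, Set.Subset.rfl, hfixall⟩
  intro w hw v k hindec hwvk
  refine ⟨(hdag w hw v k hindec hwvk).1, ?_⟩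
  intro n' hn' i hi
  have hold := (hdag w hw v k hindec hwvk).2 n' hn' i hi
  rw [← hold]
  have hppos : 0 < pPrime i := (Nat.prime_nth_prime i).pos
  have hple : pPrime i ≤ k := le_trans (Nat.nth_monotone Nat.infinite_setOf_prime hi) hn'
  have hvE : wpow v (pPrime i) ∈ E := (hdag w hw v k hindec hwvk).1 (pPrime i) hppos hple
  have hfixa : ∀ a, relPow (wordRel (insert (n,m) s) v) (pPrime i) a a →
      relPow (wordRel s v) (pPrime i) a a := by
    intro a hpa
    have h1 : wordRel (insert (n,m) s) (wpow v (pPrime i)) a a :=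
      (wordRel_wpow _ v _ a a).mpr hpa
    have h2 : a ∈ wordFix s (wpow v (pPrime i)) := by
      rw [← hfixall _ hvE]; exact h1
    exact (wordRel_wpow s v _ a a).mp h2
  have hsets := closed_orbits_card_eq
    (fun a b => wordRel_mono (Set.subset_insert _ _) v a b)
    (wordRel_func htinj v) hppos hfixa
  unfold odag
  rw [hsets]

end Assemble

/-- Domain and range extension for the coding forcing `Z†_G(r)`. -/
theorem statement14 (G : Subgroup Perm') (hG : Cofinitary G) (r : ℕ → Fin 2)
    (s : Set (ℕ × ℕ)) (E : Set Word) (hc : ZdagCond G r s E) :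
    (∀ n : ℕ, n ∉ pdom s →
      {m : ℕ | ¬ (ZdagCond G r (insert (n, m) s) E ∧
        ZLe (insert (n, m) s) E s E)}.Finite) ∧
    (∀ m : ℕ, m ∉ pran s →
      {n : ℕ | ¬ (ZdagCond G r (insert (n, m) s) E ∧
        ZLe (insert (n, m) s) E s E)}.Finite) := by
  obtain ⟨⟨hsfin, hsinj, hEfin, hEnice⟩, hcyc, hdag⟩ := hc
  set GS : Set Perm' := {g | ∃ w ∈ E, Sum.inl g ∈ w} with hGSdef
  have hGSfin : GS.Finite := by
    have h0 : GS = ⋃ w ∈ E, {g : Perm' | Sum.inl g ∈ w} := by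
      ext g; simp [hGSdef]
    rw [h0]
    refine hEfin.biUnion (fun w _ => ?_)
    have h1 : {g : Perm' | Sum.inl g ∈ w} = Sum.inl ⁻¹' {l : Letter | l ∈ w} := rfl
    rw [h1]
    exact Set.Finite.preimage (Function.Injective.injOn Sum.inl_injective) w.finite_toSet
  have hGSG : ∀ g ∈ GS, g ∈ G ∧ g ≠ 1 := by
    rintro g ⟨w, hw, hgw⟩
    exact (nice_good (hEnice w hw)).2.2.2 g hgw
  have hfixfin : ∀ g ∈ GS, {a : ℕ | g a = a}.Finite :=
    fun g hg => hG g (hGSG g hg).1 (hGSG g hg).2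
  constructor
  · -- domain extension
    intro n hn
    set X : Set ℕ := pdom s ∪ pran s ∪ {n} with hXdef
    have hXfin : X.Finite :=
      ((pdom_finite hsfin).union (pran_finite hsfin)).union (Set.finite_singleton n)
    have hBfin : (X ∪ ⋃ g ∈ GS, ((⇑g⁻¹) '' X ∪ (⇑g) '' X ∪ {a | g a = a})).Finite :=
      hXfin.union (hGSfin.biUnion
        (fun g hg => ((hXfin.image _).union (hXfin.image _)).union (hfixfin g hg)))
    apply Set.Finite.subset hBfin
    intro m hm
    rw [Set.mem_setOf_eq] at hm
    by_contra hmB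
    apply hm
    have hmX : m ∉ X := fun h => hmB (Set.mem_union_left _ h)
    have hmd : m ∉ pdom s := fun h => hmX (Set.mem_union_left _ (Set.mem_union_left _ h))
    have hmr : m ∉ pran s := fun h => hmX (Set.mem_union_left _ (Set.mem_union_right _ h))
    have hmn : m ≠ n := fun h => hmX (Set.mem_union_right _ (Set.mem_singleton_iff.mpr h))
    have hnotU : m ∉ ⋃ g ∈ GS, ((⇑g⁻¹) '' X ∪ (⇑g) '' X ∪ {a | g a = a}) :=
      fun h => hmB (Set.mem_union_right _ h)
    have hgpack : ∀ g ∈ GS, (g m ∉ pdom s ∧ g m ∉ pran s ∧ g m ≠ n ∧ g m ≠ m) ∧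
        (g⁻¹ m ∉ pdom s ∧ g⁻¹ m ∉ pran s ∧ g⁻¹ m ≠ n ∧ g⁻¹ m ≠ m) := by
      intro g hgGS
      have h1 : m ∉ (⇑g⁻¹) '' X := fun h => hnotU (Set.mem_biUnion hgGS
        (Set.mem_union_left _ (Set.mem_union_left _ h)))
      have h2 : m ∉ (⇑g) '' X := fun h => hnotU (Set.mem_biUnion hgGS
        (Set.mem_union_left _ (Set.mem_union_right _ h)))
      have h3 : g m ≠ m := fun h => hnotU (Set.mem_biUnion hgGS
        (Set.mem_union_right _ (by exact h)))
      have hgmX : g m ∉ X := fun h => h1 ⟨g m, h, Equiv.symm_apply_apply g m⟩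
      have hgmX' : g⁻¹ m ∉ X := fun h => h2 ⟨g⁻¹ m, h, Equiv.apply_symm_apply g m⟩
      have h4 : g⁻¹ m ≠ m := fun h => h3 (perm_inv_fix h)
      exact ⟨⟨fun h => hgmX (Set.mem_union_left _ (Set.mem_union_left _ h)),
        fun h => hgmX (Set.mem_union_left _ (Set.mem_union_right _ h)),
        fun h => hgmX (Set.mem_union_right _ (Set.mem_singleton_iff.mpr h)), h3⟩,
        ⟨fun h => hgmX' (Set.mem_union_left _ (Set.mem_union_left _ h)),
        fun h => hgmX' (Set.mem_union_left _ (Set.mem_union_right _ h)),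
        fun h => hgmX' (Set.mem_union_right _ (Set.mem_singleton_iff.mpr h)), h4⟩⟩
    have htinj : PartInj (insert (n,m) s) := by
      constructor
      · rintro a b c hab hac
        rcases mem_insert_pair.mp hab with ⟨rfl, rfl⟩ | h1
        · rcases mem_insert_pair.mp hac with ⟨_, rfl⟩ | h2
          · rfl
          · exact absurd (mem_pdom h2) hn
        · rcases mem_insert_pair.mp hac with ⟨rfl, rfl⟩ | h2
          · exact absurd (mem_pdom h1) hn
          · exact hsinj.1 h1 h2
      · rintro a b c hac hbc
        rcases mem_insert_pair.mp hac with ⟨rfl, rfl⟩ | h1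
        · rcases mem_insert_pair.mp hbc with ⟨rfl, _⟩ | h2
          · rfl
          · exact absurd (mem_pran h2) hmr
        · rcases mem_insert_pair.mp hbc with ⟨rfl, rfl⟩ | h2
          · exact absurd (mem_pran h1) hmr
          · exact hsinj.2 h1 h2
    have hfixall : ∀ w ∈ E, wordFix (insert (n,m) s) w = wordFix s w := by
      intro w hw
      have hgw := nice_good (hEnice w hw)
      exact fix1 hmd hmr hmn hgpack w hgw.1 hgw.2.1 (fun g hgw' => ⟨w, hw, hgw'⟩)
    exact assemble G r s E ⟨⟨hsfin, hsinj, hEfin, hEnice⟩, hcyc, hdag⟩ n m htinj hfixall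
  · -- range extension
    intro m hm
    set X : Set ℕ := pdom s ∪ pran s ∪ {m} with hXdef
    have hXfin : X.Finite :=
      ((pdom_finite hsfin).union (pran_finite hsfin)).union (Set.finite_singleton m)
    have hBfin : (X ∪ ⋃ g ∈ GS, ((⇑g⁻¹) '' X ∪ (⇑g) '' X ∪ {a | g a = a})).Finite :=
      hXfin.union (hGSfin.biUnion
        (fun g hg => ((hXfin.image _).union (hXfin.image _)).union (hfixfin g hg)))
    apply Set.Finite.subset hBfin
    intro n hn
    rw [Set.mem_setOf_eq] at hn
    by_contra hnB
    apply hn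
    have hnX : n ∉ X := fun h => hnB (Set.mem_union_left _ h)
    have hnd : n ∉ pdom s := fun h => hnX (Set.mem_union_left _ (Set.mem_union_left _ h))
    have hnr : n ∉ pran s := fun h => hnX (Set.mem_union_left _ (Set.mem_union_right _ h))
    have hnm : n ≠ m := fun h => hnX (Set.mem_union_right _ (Set.mem_singleton_iff.mpr h))
    have hnotU : n ∉ ⋃ g ∈ GS, ((⇑g⁻¹) '' X ∪ (⇑g) '' X ∪ {a | g a = a}) :=
      fun h => hnB (Set.mem_union_right _ h)
    have hgpack : ∀ g ∈ GS, (g n ∉ pdom s ∧ g n ∉ pran s ∧ g n ≠ n ∧ g n ≠ m) ∧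
        (g⁻¹ n ∉ pdom s ∧ g⁻¹ n ∉ pran s ∧ g⁻¹ n ≠ n ∧ g⁻¹ n ≠ m) := by
      intro g hgGS
      have h1 : n ∉ (⇑g⁻¹) '' X := fun h => hnotU (Set.mem_biUnion hgGS
        (Set.mem_union_left _ (Set.mem_union_left _ h)))
      have h2 : n ∉ (⇑g) '' X := fun h => hnotU (Set.mem_biUnion hgGS
        (Set.mem_union_left _ (Set.mem_union_right _ h)))
      have h3 : g n ≠ n := fun h => hnotU (Set.mem_biUnion hgGS
        (Set.mem_union_right _ (by exact h)))
      have hgnX : g n ∉ X := fun h => h1 ⟨g n, h, Equiv.symm_apply_apply g n⟩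
      have hgnX' : g⁻¹ n ∉ X := fun h => h2 ⟨g⁻¹ n, h, Equiv.apply_symm_apply g n⟩
      have h4 : g⁻¹ n ≠ n := fun h => h3 (perm_inv_fix h)
      exact ⟨⟨fun h => hgnX (Set.mem_union_left _ (Set.mem_union_left _ h)),
        fun h => hgnX (Set.mem_union_left _ (Set.mem_union_right _ h)), h3,
        fun h => hgnX (Set.mem_union_right _ (Set.mem_singleton_iff.mpr h))⟩,
        ⟨fun h => hgnX' (Set.mem_union_left _ (Set.mem_union_left _ h)),
        fun h => hgnX' (Set.mem_union_left _ (Set.mem_union_right _ h)), h4,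
        fun h => hgnX' (Set.mem_union_right _ (Set.mem_singleton_iff.mpr h))⟩⟩
    have htinj : PartInj (insert (n,m) s) := by
      constructor
      · rintro a b c hab hac
        rcases mem_insert_pair.mp hab with ⟨rfl, rfl⟩ | h1
        · rcases mem_insert_pair.mp hac with ⟨_, rfl⟩ | h2
          · rfl
          · exact absurd (mem_pdom h2) hnd
        · rcases mem_insert_pair.mp hac with ⟨rfl, rfl⟩ | h2
          · exact absurd (mem_pdom h1) hnd
          · exact hsinj.1 h1 h2
      · rintro a b c hac hbc
        rcases mem_insert_pair.mp hac with ⟨rfl, rfl⟩ | h1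
        · rcases mem_insert_pair.mp hbc with ⟨rfl, _⟩ | h2
          · rfl
          · exact absurd (mem_pran h2) hm
        · rcases mem_insert_pair.mp hbc with ⟨rfl, rfl⟩ | h2
          · exact absurd (mem_pran h1) hm
          · exact hsinj.2 h1 h2
    have hfixall : ∀ w ∈ E, wordFix (insert (n,m) s) w = wordFix s w := by
      intro w hw
      have hgw := nice_good (hEnice w hw)
      exact fix2 hnd hnr hnm hgpack w hgw.1 hgw.2.1
        (fun u hu => (hgw.2.2.1 u) hu) (fun g hgw' => ⟨w, hw, hgw'⟩)
    exact assemble G r s E ⟨⟨hsfin, hsinj, hEfin, hEnice⟩, hcyc, hdag⟩ n m htinj hfixall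

end
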